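/- Let (γ_n) be an orthonormal basis of L²(Ω) and h: Ω → Ω a measurable map inducing a bounded composition operator C_h on L²(Ω). Then (C_h γ_n) is a Riesz basis of L²(Ω) if and only if h is injective (in the sense that there exists a measurable ζ with ζ ∘ h = id a.e.) and there exists r > 0 such that g_h ≥ r almost everywhere. -/

import Mathlib

open MeasureTheory ENNReal

set_option linter.unusedSectionVars false
set_option maxHeartbeats 1000000

/-- Lebesgue measure on a subset `Ω` of `ℝ^d`, viewed as a measure on the subtype. -/
noncomputable def lebOn {d : ℕ} (Ω : Set (EuclideanSpace ℝ (Fin d))) : Measure Ω :=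
  (volume : Measure (EuclideanSpace ℝ (Fin d))).comap Subtype.val

/-- A sequence is a Riesz basis if it is the image of an orthonormal (Hilbert) basis
under a bounded bijective operator. -/
def IsRieszBasis {H : Type*} [NormedAddCommGroup H] [InnerProductSpace ℝ H]
    [CompleteSpace H] (φ : ℕ → H) : Prop :=
  ∃ (γ : HilbertBasis ℕ ℝ H) (U : H ≃L[ℝ] H), ∀ n, φ n = U (γ n)


lemma rieszBasis_toEquiv {H : Type*} [NormedAddCommGroup H] [InnerProductSpace ℝ H]
    [CompleteSpace H] (γ : HilbertBasis ℕ ℝ H) (T : H →L[ℝ] H)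
    (hR : IsRieszBasis (fun n => T (γ n))) : ∃ E : H ≃L[ℝ] H, (⇑E : H → H) = ⇑T := by
  classical
  obtain ⟨γ', U, hU⟩ := hR
  set W : H ≃ₗᵢ[ℝ] H := γ.repr.trans γ'.repr.symm with hW
  have hWγ : ∀ n, W (γ n) = γ' n := by
    intro n
    simp only [hW, LinearIsometryEquiv.trans_apply, γ.repr_self]
    rw [← γ'.repr_self n, LinearIsometryEquiv.symm_apply_apply]
  set E : H ≃L[ℝ] H := W.toContinuousLinearEquiv.trans U with hE
  have hext : (E : H →L[ℝ] H) = T := by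
    apply ContinuousLinearMap.ext_on (Submodule.dense_iff_topologicalClosure_eq_top.mpr γ.dense_span)
    rintro x ⟨n, rfl⟩
    have : E (γ n) = U (γ' n) := by
      simp [hE, hWγ n]
    simpa [this] using (hU n).symm
  exact ⟨E, by rw [← hext]; rfl⟩

lemma isRieszBasis_of_bijective {H : Type*} [NormedAddCommGroup H] [InnerProductSpace ℝ H]
    [CompleteSpace H] (γ : HilbertBasis ℕ ℝ H) (T : H →L[ℝ] H)
    (hbij : Function.Bijective T) : IsRieszBasis (fun n => T (γ n)) := by
  refine ⟨γ, ContinuousLinearEquiv.ofBijective T (LinearMap.ker_eq_bot.mpr hbij.1)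
    (LinearMap.range_eq_top.mpr hbij.2), fun n => ?_⟩
  exact (congrFun (ContinuousLinearEquiv.coeFn_ofBijective T _ _) (γ n)).symm
section
variable {α : Type*} [MeasurableSpace α] {μ : Measure α} [SigmaFinite μ]
  {h : α → α}

-- key norm identity
lemma hTnorm_aux (hm : Measurable h) (hac : μ.map h ≪ μ) (T : Lp ℝ 2 μ →L[ℝ] Lp ℝ 2 μ)
    (hT : ∀ f : Lp ℝ 2 μ, (T f : α → ℝ) =ᵐ[μ] fun x => f (h x))
    (f : Lp ℝ 2 μ) : eLpNorm (⇑(T f)) 2 μ = eLpNorm (⇑f) 2 (μ.map h) := by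
  have hfν : AEStronglyMeasurable (⇑f) (μ.map h) := (Lp.aestronglyMeasurable f).mono_ac hac
  calc eLpNorm (⇑(T f)) 2 μ = eLpNorm (fun x => f (h x)) 2 μ := eLpNorm_congr_ae (hT f)
    _ = eLpNorm ((⇑f) ∘ h) 2 μ := rfl
    _ = eLpNorm (⇑f) 2 (μ.map h) := (eLpNorm_map_measure hfν hm.aemeasurable).symm

lemma comp_ae_aux (hm : Measurable h) (hac : μ.map h ≪ μ) {f₁ f₂ : α → ℝ} (hFf : f₁ =ᵐ[μ] f₂) :
    (fun x => f₁ (h x)) =ᵐ[μ] (fun x => f₂ (h x)) :=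
  ae_eq_comp hm.aemeasurable (hFf.filter_mono hac.ae_le)

lemma backward_aux (hm : Measurable h) (hac : μ.map h ≪ μ) (γ : HilbertBasis ℕ ℝ (Lp ℝ 2 μ)) (T : Lp ℝ 2 μ →L[ℝ] Lp ℝ 2 μ)
    (hT : ∀ f : Lp ℝ 2 μ, (T f : α → ℝ) =ᵐ[μ] fun x => f (h x))
    (ζ : α → α) (hζm : Measurable ζ) (hζh : (ζ ∘ h : α → α) =ᵐ[μ] id)
    (r : ℝ≥0∞) (hr0 : 0 < r) (hrg : ∀ᵐ x ∂μ, r ≤ (μ.map h).rnDeriv μ x) :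
    IsRieszBasis (fun n => T (γ n)) := by
  classical
  set ν := μ.map h with hνdef
  set g := ν.rnDeriv μ with hgdef
  have hν_eq : μ.withDensity g = ν := Measure.withDensity_rnDeriv_eq ν μ hac
  -- normalize r
  set r' := min r 1 with hr'def
  have hr'0 : 0 < r' := lt_min hr0 one_pos
  have hr'top : r' ≠ ⊤ := ((min_le_right r 1).trans_lt one_lt_top).ne
  have hr'g : ∀ᵐ x ∂μ, r' ≤ g x := hrg.mono fun x hx => (min_le_left r 1).trans hx
  have hrμν : r' • μ ≤ ν := by
    rw [← hν_eq, ← withDensity_const]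
    exact withDensity_mono hr'g
  have hμν : μ ≪ ν := by
    refine Measure.AbsolutelyContinuous.mk (fun A hA hA0 => ?_)
    have h1 : (r' • μ) A ≤ ν A := Measure.le_iff'.mp hrμν A
    rw [hA0, Measure.smul_apply, smul_eq_mul, nonpos_iff_eq_zero, mul_eq_zero] at h1
    exact h1.resolve_left hr'0.ne'
  -- injectivity
  have hTinj : Function.Injective T := by
    intro a b hab
    have h0T : T (a - b) = 0 := by rw [map_sub, hab, sub_self]
    have h0 : eLpNorm (⇑(a - b)) 2 ν = 0 := by
      rw [← hTnorm_aux hm hac T hT (a - b), h0T]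
      exact (eLpNorm_congr_ae (Lp.coeFn_zero ℝ 2 μ)).trans eLpNorm_zero
    have h1 : (⇑(a - b) : α → ℝ) =ᵐ[ν] 0 :=
      (eLpNorm_eq_zero_iff ((Lp.aestronglyMeasurable _).mono_ac hac) two_ne_zero).mp h0
    have h2 : (⇑(a - b) : α → ℝ) =ᵐ[μ] 0 := h1.filter_mono hμν.ae_le
    have h3 : a - b = 0 := Lp.ext (h2.trans (Lp.coeFn_zero ℝ 2 μ).symm)
    exact sub_eq_zero.mp h3
  -- surjectivity
  have hTsurj : Function.Surjective T := by
    intro y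
    set y' := (Lp.aestronglyMeasurable y).mk (⇑y) with hy'def
    have hy'm : StronglyMeasurable y' := (Lp.aestronglyMeasurable y).stronglyMeasurable_mk
    have hyae : (⇑y : α → ℝ) =ᵐ[μ] y' := (Lp.aestronglyMeasurable y).ae_eq_mk
    set f : α → ℝ := fun x => y' (ζ x) with hfdef
    have hfm : StronglyMeasurable f := hy'm.comp_measurable hζm
    have hfh : (fun x => f (h x)) =ᵐ[μ] ⇑y := by
      filter_upwards [hζh, hyae] with x hx1 hx2
      have : ζ (h x) = x := hx1
      simp only [hfdef, this]
      exact hx2.symm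
    have hIy : ∫⁻ x, (‖(y : α → ℝ) x‖₊ : ℝ≥0∞) ^ (2 : ℝ≥0∞).toReal ∂μ < ∞ :=
      lintegral_rpow_enorm_lt_top_of_eLpNorm_lt_top two_ne_zero ENNReal.ofNat_ne_top (Lp.eLpNorm_lt_top y)
    have hmemf : MemLp f 2 μ := by
      refine ⟨hfm.aestronglyMeasurable, ?_⟩
      rw [eLpNorm_lt_top_iff_lintegral_rpow_enorm_lt_top two_ne_zero ENNReal.ofNat_ne_top]
      have hFmeas : AEMeasurable (fun z => (‖f z‖₊ : ℝ≥0∞) ^ (2 : ℝ≥0∞).toReal) ν :=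
        ((hfm.measurable.nnnorm.coe_nnreal_ennreal).pow_const _).aemeasurable
      have key : ∫⁻ x, (‖f x‖₊ : ℝ≥0∞) ^ (2 : ℝ≥0∞).toReal ∂ν
          = ∫⁻ x, (‖(y : α → ℝ) x‖₊ : ℝ≥0∞) ^ (2 : ℝ≥0∞).toReal ∂μ := by
        rw [hνdef, lintegral_map' hFmeas hm.aemeasurable]
        refine lintegral_congr_ae ?_
        filter_upwards [hfh] with x hx
        rw [hx]
      have step : ∫⁻ x, (‖f x‖₊ : ℝ≥0∞) ^ (2 : ℝ≥0∞).toReal ∂μ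
          ≤ r'⁻¹ * ∫⁻ x, (‖f x‖₊ : ℝ≥0∞) ^ (2 : ℝ≥0∞).toReal ∂ν := by
        have h1 : r' * ∫⁻ x, (‖f x‖₊ : ℝ≥0∞) ^ (2 : ℝ≥0∞).toReal ∂μ
            ≤ ∫⁻ x, (‖f x‖₊ : ℝ≥0∞) ^ (2 : ℝ≥0∞).toReal ∂ν := by
          rw [← smul_eq_mul, ← lintegral_smul_measure]
          exact lintegral_mono' hrμν le_rfl
        calc ∫⁻ x, (‖f x‖₊ : ℝ≥0∞) ^ (2 : ℝ≥0∞).toReal ∂μ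
            = r'⁻¹ * (r' * ∫⁻ x, (‖f x‖₊ : ℝ≥0∞) ^ (2 : ℝ≥0∞).toReal ∂μ) := by
              rw [← mul_assoc, ENNReal.inv_mul_cancel hr'0.ne' hr'top, one_mul]
          _ ≤ r'⁻¹ * ∫⁻ x, (‖f x‖₊ : ℝ≥0∞) ^ (2 : ℝ≥0∞).toReal ∂ν := by
              exact mul_le_mul_right h1 _
      calc ∫⁻ x, (‖f x‖₊ : ℝ≥0∞) ^ (2 : ℝ≥0∞).toReal ∂μ
          ≤ r'⁻¹ * ∫⁻ x, (‖f x‖₊ : ℝ≥0∞) ^ (2 : ℝ≥0∞).toReal ∂ν := step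
        _ = r'⁻¹ * ∫⁻ x, (‖(y : α → ℝ) x‖₊ : ℝ≥0∞) ^ (2 : ℝ≥0∞).toReal ∂μ := by rw [key]
        _ < ∞ := ENNReal.mul_lt_top (ENNReal.inv_lt_top.mpr hr'0) hIy
    refine ⟨hmemf.toLp f, Lp.ext ?_⟩
    have e1 : ⇑(T (hmemf.toLp f)) =ᵐ[μ] fun x => (hmemf.toLp f : α → ℝ) (h x) := hT _
    have e2 : (⇑(hmemf.toLp f) : α → ℝ) =ᵐ[μ] f := hmemf.coeFn_toLp
    have e3 : (fun x => (hmemf.toLp f : α → ℝ) (h x)) =ᵐ[μ] fun x => f (h x) :=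
      comp_ae_aux hm hac e2
    exact e1.trans (e3.trans hfh)
  exact isRieszBasis_of_bijective γ T ⟨hTinj, hTsurj⟩
end
section
variable {α : Type*} [MeasurableSpace α] {μ : Measure α} {h : α → α}

set_option maxHeartbeats 1000000 in
lemma forward_density [SigmaFinite μ]
    (hm : Measurable h) (hac : μ.map h ≪ μ) (T : Lp ℝ 2 μ →L[ℝ] Lp ℝ 2 μ)
    (hT : ∀ f : Lp ℝ 2 μ, (T f : α → ℝ) =ᵐ[μ] fun x => f (h x))
    (E : Lp ℝ 2 μ ≃L[ℝ] Lp ℝ 2 μ) (hE : (⇑E : Lp ℝ 2 μ → Lp ℝ 2 μ) = ⇑T) :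
    ∃ r : ℝ≥0∞, 0 < r ∧ ∀ᵐ x ∂μ, r ≤ (μ.map h).rnDeriv μ x := by
  classical
  set ν := μ.map h with hνdef
  set g := ν.rnDeriv μ with hgdef
  have hν_eq : μ.withDensity g = ν := Measure.withDensity_rnDeriv_eq ν μ hac
  set C : ℝ := ‖(E.symm : Lp ℝ 2 μ →L[ℝ] Lp ℝ 2 μ)‖ + 1 with hCdef
  have hCpos : (0:ℝ) < C := by positivity
  have hlow : ∀ f : Lp ℝ 2 μ, ‖f‖ ≤ C * ‖T f‖ := by
    intro f
    have h1 : f = E.symm (T f) := by rw [← hE, E.symm_apply_apply]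
    calc ‖f‖ = ‖E.symm (T f)‖ := by rw [← h1]
      _ ≤ ‖(E.symm : Lp ℝ 2 μ →L[ℝ] Lp ℝ 2 μ)‖ * ‖T f‖ :=
        (E.symm : Lp ℝ 2 μ →L[ℝ] Lp ℝ 2 μ).le_opNorm _
      _ ≤ C * ‖T f‖ := by
        have := norm_nonneg (T f)
        nlinarith
  have hlow' : ∀ f : Lp ℝ 2 μ,
      eLpNorm (⇑f) 2 μ ≤ ENNReal.ofReal C * eLpNorm (⇑(T f)) 2 μ := by
    intro f
    have h1 : eLpNorm (⇑f) 2 μ = ENNReal.ofReal ‖f‖ := by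
      rw [Lp.norm_def, ENNReal.ofReal_toReal (Lp.eLpNorm_ne_top f)]
    have h2 : eLpNorm (⇑(T f)) 2 μ = ENNReal.ofReal ‖T f‖ := by
      rw [Lp.norm_def, ENNReal.ofReal_toReal (Lp.eLpNorm_ne_top _)]
    rw [h1, h2, ← ENNReal.ofReal_mul hCpos.le]
    exact ENNReal.ofReal_le_ofReal (hlow f)
  set D : ℝ≥0∞ := (ENNReal.ofReal C) ^ (2:ℕ) with hDdef
  have hD0 : D ≠ 0 := pow_ne_zero 2 (ENNReal.ofReal_pos.mpr hCpos).ne'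
  have hDtop : D ≠ ⊤ := ENNReal.pow_ne_top ENNReal.ofReal_ne_top
  have hmeas_low : ∀ (A : Set α), MeasurableSet A → μ A < ∞ → μ A ≤ D * ν A := by
    intro A hA hAfin
    set F : Lp ℝ 2 μ := indicatorConstLp 2 hA hAfin.ne (1:ℝ) with hFdef
    have h1 : eLpNorm (⇑F) 2 μ = (μ A) ^ (1/2 : ℝ) := by
      rw [eLpNorm_congr_ae indicatorConstLp_coeFn,
        eLpNorm_indicator_const hA two_ne_zero ENNReal.ofNat_ne_top]
      simp
    have h2 : eLpNorm (⇑(T F)) 2 μ = (ν A) ^ (1/2 : ℝ) := by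
      rw [hTnorm_aux hm hac T hT F, ← hνdef,
        eLpNorm_congr_ae (indicatorConstLp_coeFn.filter_mono hac.ae_le),
        eLpNorm_indicator_const hA two_ne_zero ENNReal.ofNat_ne_top]
      simp
    have h3 : (μ A) ^ (1/2 : ℝ) ≤ ENNReal.ofReal C * (ν A) ^ (1/2 : ℝ) := by
      rw [← h1, ← h2]; exact hlow' F
    have h4 := ENNReal.rpow_le_rpow h3 (by norm_num : (0:ℝ) ≤ 2)
    rw [← ENNReal.rpow_mul, ENNReal.mul_rpow_of_nonneg _ _ (by norm_num : (0:ℝ) ≤ 2),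
      ← ENNReal.rpow_mul] at h4
    norm_num at h4
    exact h4
  set r : ℝ≥0∞ := (2 * D)⁻¹ with hrdef
  have hr0 : 0 < r := ENNReal.inv_pos.mpr (ENNReal.mul_ne_top ENNReal.ofNat_ne_top hDtop)
  refine ⟨r, hr0, ?_⟩
  set s : Set α := {x | g x < r} with hsdef
  have hsm : MeasurableSet s := measurableSet_lt (Measure.measurable_rnDeriv ν μ) measurable_const
  have hn : ∀ n, μ (s ∩ spanningSets μ n) = 0 := by
    intro n
    set A := s ∩ spanningSets μ n with hAdef
    have hA : MeasurableSet A := hsm.inter (measurableSet_spanningSets μ n)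
    have hAfin : μ A < ∞ :=
      lt_of_le_of_lt (measure_mono Set.inter_subset_right) (measure_spanningSets_lt_top μ n)
    have hνA : ν A ≤ r * μ A := by
      rw [← hν_eq, withDensity_apply _ hA]
      calc ∫⁻ x in A, g x ∂μ ≤ ∫⁻ _x in A, r ∂μ :=
          setLIntegral_mono' hA (fun x hx => le_of_lt hx.1)
        _ = r * μ A := by rw [setLIntegral_const]
    have hhalf : μ A ≤ 2⁻¹ * μ A := by
      calc μ A ≤ D * ν A := hmeas_low A hA hAfin
        _ ≤ D * (r * μ A) := mul_le_mul_right hνA D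
        _ = D * r * μ A := by ring
        _ = 2⁻¹ * μ A := by
          congr 1
          rw [hrdef, ENNReal.mul_inv (Or.inl two_ne_zero) (Or.inl ENNReal.ofNat_ne_top), ← mul_assoc,
            mul_comm D, mul_assoc, ENNReal.mul_inv_cancel hD0 hDtop, mul_one]
    by_contra hne
    have hlt : 2⁻¹ * μ A < μ A := by
      rw [← ENNReal.div_eq_inv_mul]
      exact ENNReal.half_lt_self hne hAfin.ne
    exact absurd hhalf (not_le.mpr hlt)
  have hs0 : μ s = 0 := by
    have : s = ⋃ n, s ∩ spanningSets μ n := by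
      rw [← Set.inter_iUnion, iUnion_spanningSets, Set.inter_univ]
    rw [this]
    exact measure_iUnion_null hn
  have hae : ∀ᵐ x ∂μ, x ∉ s := measure_eq_zero_iff_ae_notMem.mp hs0
  filter_upwards [hae] with x hx
  simp only [hsdef, Set.mem_setOf_eq, not_lt] at hx
  exact hx
end

section zeta
variable {α : Type*} [MeasurableSpace α] [StandardBorelSpace α] [Nonempty α]
  {μ : Measure α} [SigmaFinite μ] {h : α → α}

lemma forward_zeta (hm : Measurable h) (hac : μ.map h ≪ μ)
    (T : Lp ℝ 2 μ →L[ℝ] Lp ℝ 2 μ)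
    (hT : ∀ f : Lp ℝ 2 μ, (T f : α → ℝ) =ᵐ[μ] fun x => f (h x))
    (E : Lp ℝ 2 μ ≃L[ℝ] Lp ℝ 2 μ) (hE : (⇑E : Lp ℝ 2 μ → Lp ℝ 2 μ) = ⇑T) :
    ∃ ζ : α → α, Measurable ζ ∧ (ζ ∘ h : α → α) =ᵐ[μ] id := by
  classical
  obtain ⟨e, he⟩ := exists_measurableEmbedding_real α
  set φ : α → ℝ := fun x => Real.arctan (e x) with hφdef
  have hφm : Measurable φ := Real.measurable_arctan.comp he.measurable
  have hφi : Function.Injective φ := fun a b hab => he.injective (Real.arctan_injective hab)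
  have hφe : MeasurableEmbedding φ := hφm.measurableEmbedding hφi
  have hφb : ∀ x, ‖φ x‖ ≤ 2 := by
    intro x
    rw [Real.norm_eq_abs, abs_le]
    have h1 := Real.arctan_lt_pi_div_two (e x)
    have h2 := Real.neg_pi_div_two_lt_arctan (e x)
    have h3 := Real.pi_le_four
    constructor <;> [skip; skip] <;> simp only [hφdef] <;> linarith
  -- weight function
  obtain ⟨w0, hw0pos, hw0m, hw0int⟩ := exists_pos_lintegral_lt_of_sigmaFinite μ one_ne_zero
  set w : α → ℝ := fun x => min (w0 x : ℝ) 1 with hwdef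
  have hwm : Measurable w := (measurable_coe_nnreal_real.comp hw0m).min measurable_const
  have hwpos : ∀ x, 0 < w x := fun x => lt_min (by exact_mod_cast hw0pos x) one_pos
  have hwle1 : ∀ x, w x ≤ 1 := fun x => min_le_right _ _
  -- membership lemma
  have hmem : ∀ f : α → ℝ, Measurable f → (∀ x, ‖f x‖ ≤ 2 * w x) → MemLp f 2 μ := by
    intro f hfm hfb
    refine ⟨hfm.aestronglyMeasurable, ?_⟩
    rw [eLpNorm_lt_top_iff_lintegral_rpow_enorm_lt_top two_ne_zero ENNReal.ofNat_ne_top]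
    have hpt : ∀ x, (‖f x‖₊ : ℝ≥0∞) ^ (2:ℝ≥0∞).toReal ≤ 4 * (w0 x : ℝ≥0∞) := by
      intro x
      have h1 : (‖f x‖₊ : ℝ≥0∞) ≤ 2 * ENNReal.ofReal (w x) := by
        rw [← enorm_eq_nnnorm, ← ofReal_norm]
        calc ENNReal.ofReal ‖f x‖ ≤ ENNReal.ofReal (2 * w x) := ENNReal.ofReal_le_ofReal (hfb x)
          _ = ENNReal.ofReal 2 * ENNReal.ofReal (w x) := ENNReal.ofReal_mul (by norm_num)
          _ = 2 * ENNReal.ofReal (w x) := by rw [ENNReal.ofReal_ofNat]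
      have h2 : ((‖f x‖₊ : ℝ≥0∞)) ^ (2:ℝ≥0∞).toReal
          ≤ (2 * ENNReal.ofReal (w x)) ^ (2:ℝ) := by
        rw [ENNReal.toReal_ofNat]
        exact ENNReal.rpow_le_rpow h1 (by norm_num)
      refine h2.trans ?_
      rw [ENNReal.mul_rpow_of_nonneg _ _ (by norm_num : (0:ℝ) ≤ 2)]
      have h3 : (2:ℝ≥0∞) ^ (2:ℝ) = 4 := by
        rw [show (2:ℝ) = ((2:ℕ):ℝ) by norm_num, ENNReal.rpow_natCast]
        norm_num
      rw [h3]
      refine mul_le_mul_right ?_ 4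
      have h4 : ENNReal.ofReal (w x) ^ (2:ℝ) ≤ ENNReal.ofReal (w x) ^ (1:ℝ) :=
        ENNReal.rpow_le_rpow_of_exponent_ge (ENNReal.ofReal_le_one.mpr (hwle1 x)) (by norm_num)
      rw [ENNReal.rpow_one] at h4
      refine h4.trans ?_
      calc ENNReal.ofReal (w x) ≤ ENNReal.ofReal (w0 x : ℝ) :=
          ENNReal.ofReal_le_ofReal (min_le_left _ _)
        _ = (w0 x : ℝ≥0∞) := ENNReal.ofReal_coe_nnreal
    calc ∫⁻ x, (‖f x‖₊ : ℝ≥0∞) ^ (2:ℝ≥0∞).toReal ∂μ ≤ ∫⁻ x, 4 * (w0 x : ℝ≥0∞) ∂μ :=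
        lintegral_mono hpt
      _ = 4 * ∫⁻ x, (w0 x : ℝ≥0∞) ∂μ := lintegral_const_mul 4 hw0m.coe_nnreal_ennreal
      _ < ∞ := ENNReal.mul_lt_top (by norm_num) (hw0int.trans one_lt_top)
  have hmemw : MemLp w 2 μ := hmem w hwm (by
    intro x
    rw [Real.norm_eq_abs, abs_of_pos (hwpos x)]
    nlinarith [hwpos x])
  have hmemφw : MemLp (fun x => φ x * w x) 2 μ := hmem _ (hφm.mul hwm) (by
    intro x
    rw [norm_mul]
    have h1 := hφb x
    have h2 : ‖w x‖ = w x := by rw [Real.norm_eq_abs, abs_of_pos (hwpos x)]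
    rw [h2]
    nlinarith [hwpos x, norm_nonneg (φ x)])
  -- surjectivity
  have hTsurj : Function.Surjective T := by
    intro y
    exact ⟨E.symm y, by rw [← hE, E.apply_symm_apply]⟩
  obtain ⟨U, hU⟩ := hTsurj (hmemw.toLp w)
  obtain ⟨V, hV⟩ := hTsurj (hmemφw.toLp _)
  set u : α → ℝ := (Lp.aestronglyMeasurable U).mk (⇑U) with hudef
  set v : α → ℝ := (Lp.aestronglyMeasurable V).mk (⇑V) with hvdef
  have hum : StronglyMeasurable u := (Lp.aestronglyMeasurable U).stronglyMeasurable_mk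
  have hvm : StronglyMeasurable v := (Lp.aestronglyMeasurable V).stronglyMeasurable_mk
  have hcomp : ∀ (F : Lp ℝ 2 μ) (f : α → ℝ), (⇑F : α → ℝ) =ᵐ[μ] f →
      (fun x => F (h x)) =ᵐ[μ] (fun x => f (h x)) := fun F f hFf =>
    ae_eq_comp hm.aemeasurable (hFf.filter_mono hac.ae_le)
  have h1 : (fun x => u (h x)) =ᵐ[μ] w := by
    have e1 : ⇑(T U) =ᵐ[μ] fun x => U (h x) := hT U
    have e2 : ⇑(T U) =ᵐ[μ] w := by rw [hU]; exact MemLp.coeFn_toLp _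
    exact ((hcomp U u (Lp.aestronglyMeasurable U).ae_eq_mk).symm).trans (e1.symm.trans e2)
  have h2 : (fun x => v (h x)) =ᵐ[μ] fun x => φ x * w x := by
    have e1 : ⇑(T V) =ᵐ[μ] fun x => V (h x) := hT V
    have e2 : ⇑(T V) =ᵐ[μ] fun x => φ x * w x := by rw [hV]; exact MemLp.coeFn_toLp _
    exact ((hcomp V v (Lp.aestronglyMeasurable V).ae_eq_mk).symm).trans (e1.symm.trans e2)
  obtain ⟨ρ, hρm, hρφ⟩ := hφe.exists_measurable_extend measurable_id
    (fun _ => ‹Nonempty α›)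
  set ψ : α → ℝ := fun y => v y / u y with hψdef
  have hψm : Measurable ψ := hvm.measurable.div hum.measurable
  refine ⟨fun y => ρ (ψ y), hρm.comp hψm, ?_⟩
  filter_upwards [h1, h2] with x hx1 hx2
  show ρ (ψ (h x)) = x
  have hψx : ψ (h x) = φ x := by
    simp only [hψdef]
    rw [hx2, hx1]
    exact mul_div_cancel_right₀ _ (ne_of_gt (hwpos x))
  rw [hψx]
  exact congrFun hρφ x
end zeta

theorem induced_Riesz_basis_iff
    {d : ℕ} (Ω : Set (EuclideanSpace ℝ (Fin d))) (hΩ : IsOpen Ω)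
    (h : Ω → Ω) (hm : Measurable h)
    (hac : (lebOn Ω).map h ≪ lebOn Ω)
    (hbd : essSup (((lebOn Ω).map h).rnDeriv (lebOn Ω)) (lebOn Ω) ≠ ⊤)
    (γ : HilbertBasis ℕ ℝ (Lp ℝ 2 (lebOn Ω)))
    (T : Lp ℝ 2 (lebOn Ω) →L[ℝ] Lp ℝ 2 (lebOn Ω))
    (hT : ∀ f : Lp ℝ 2 (lebOn Ω), (T f : Ω → ℝ) =ᵐ[lebOn Ω] fun x => f (h x)) :
    IsRieszBasis (fun n => T (γ n)) ↔
      ((∃ ζ : Ω → Ω, Measurable ζ ∧ (ζ ∘ h : Ω → Ω) =ᵐ[lebOn Ω] id) ∧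
        ∃ r : ℝ≥0∞, 0 < r ∧
          ∀ᵐ x ∂(lebOn Ω), r ≤ ((lebOn Ω).map h).rnDeriv (lebOn Ω) x) := by
  classical
  haveI hsf : SigmaFinite (lebOn Ω) := by
    refine SigmaFinite.of_map _ measurable_subtype_coe.aemeasurable ?_
    rw [lebOn, (MeasurableEmbedding.subtype_coe hΩ.measurableSet).map_comap]
    infer_instance
  rcases isEmpty_or_nonempty Ω with hemp | hne
  · constructor
    · intro _
      exact ⟨⟨h, hm, ae_of_all _ fun x => isEmptyElim x⟩, 1, one_pos,
        ae_of_all _ fun x => isEmptyElim x⟩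
    · intro _
      haveI : Subsingleton (Lp ℝ 2 (lebOn Ω)) :=
        ⟨fun a b => Lp.ext (ae_of_all _ fun x => isEmptyElim x)⟩
      exact ⟨γ, ContinuousLinearEquiv.refl ℝ _, fun n => Subsingleton.elim _ _⟩
  · haveI : PolishSpace Ω := hΩ.polishSpace
    constructor
    · intro hR
      obtain ⟨E, hE⟩ := rieszBasis_toEquiv γ T hR
      exact ⟨forward_zeta hm hac T hT E hE, forward_density hm hac T hT E hE⟩
    · rintro ⟨⟨ζ, hζm, hζh⟩, r, hr0, hrg⟩
      exact backward_aux hm hac γ T hT ζ hζm hζh r hr0 hrg
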